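/- A graph has book thickness at most 1 if and only if it is outerplanar. -/

import Mathlib

open SimpleGraph

/-- A book embedding of `G` on `p` pages with respect to the linear order on the vertices
given by the injection `ord : V ↪ ℕ`: a symmetric page assignment of the edges to pages
`0, …, p-1` such that no two edges on the same page cross. -/
def IsBookEmbedding {V : Type*} (G : SimpleGraph V) (p : ℕ)
    (ord : V ↪ ℕ) (page : V → V → ℕ) : Prop :=
  (∀ a b, page a b = page b a) ∧
  (∀ a b, G.Adj a b → page a b < p) ∧
  (∀ a b c d, G.Adj a b → G.Adj c d → page a b = page c d →
    ¬ (ord a < ord c ∧ ord c < ord b ∧ ord b < ord d))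

/-- The book thickness of `G`: the least number of pages over all book embeddings. -/
noncomputable def bookThickness {V : Type*} (G : SimpleGraph V) : ℕ :=
  sInf {p | ∃ ord page, IsBookEmbedding G p ord page}

/-- A straight-line plane drawing of a (finite simple) graph: vertices go to distinct points
of the plane and the closed segments representing distinct edges meet only at shared
endpoints.  By Fáry's theorem, a finite simple graph is planar iff it has such a drawing. -/
def IsPlaneDrawing {V : Type*} (G : SimpleGraph V) (pos : V → ℝ × ℝ) : Prop :=
  Function.Injective pos ∧
  (∀ a b c d : V, G.Adj a b → G.Adj c d → a ≠ c → a ≠ d → b ≠ c → b ≠ d →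
    segment ℝ (pos a) (pos b) ∩ segment ℝ (pos c) (pos d) = ∅) ∧
  (∀ a b c : V, G.Adj a b → G.Adj a c → b ≠ c →
    segment ℝ (pos a) (pos b) ∩ segment ℝ (pos a) (pos c) = {pos a}) ∧
  (∀ a b v : V, G.Adj a b → v ≠ a → v ≠ b → pos v ∉ segment ℝ (pos a) (pos b))

/-- A graph is planar if it admits a plane (straight-line) drawing. -/
def IsPlanarG {V : Type*} (G : SimpleGraph V) : Prop :=
  ∃ pos : V → ℝ × ℝ, IsPlaneDrawing G pos

/-- A graph is outerplanar if it admits a plane drawing in which every vertex lies on the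
outer face, i.e. every vertex point is an extreme point of the drawing (it is not in the
convex hull of the other vertex points). -/
def IsOuterplanarG {V : Type*} (G : SimpleGraph V) : Prop :=
  ∃ pos : V → ℝ × ℝ, IsPlaneDrawing G pos ∧
    ∀ v : V, pos v ∉ convexHull ℝ (pos '' {w | w ≠ v})

lemma BT.aux0 (ta tb tc td x : ℝ) (hab : ta < tb) (hcd : tc < td)
    (h1 : ¬(ta < tc ∧ tc < tb ∧ tb < td)) (h2 : ¬(tc < ta ∧ ta < td ∧ td < tb))
    (hac : ta ≠ tc) (had : ta ≠ td) (hbc : tb ≠ tc) (hbd : tb ≠ td)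
    (hx1 : ta ≤ x) (hx2 : x ≤ tb) (hx3 : tc ≤ x) (hx4 : x ≤ td)
    (hy : (ta+tb)*x - ta*tb = (tc+td)*x - tc*td) : False := by
  rcases lt_trichotomy ta tc with h | h | h
  · rcases lt_trichotomy tb tc with h' | h' | h'
    · linarith
    · exact hbc h'
    · rcases lt_trichotomy tb td with h'' | h'' | h''
      · exact h1 ⟨h, h', h''⟩
      · exact hbd h''
      · -- nested: ta < tc ≤ x ≤ td < tb
        have key : (td - x) * ((tc - ta) * (tb - tc)) + (x - tc) * ((td - ta) * (tb - td)) = 0 := by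
          linear_combination (td - tc) * hy
        have k1 : (0:ℝ) < (tc - ta) * (tb - tc) := by nlinarith
        have k2 : (0:ℝ) < (td - ta) * (tb - td) := by nlinarith
        have e1 : (td - x) * ((tc - ta) * (tb - tc)) = 0 := by nlinarith
        have e2 : (x - tc) * ((td - ta) * (tb - td)) = 0 := by nlinarith
        have : td - x = 0 := by
          rcases mul_eq_zero.mp e1 with h0 | h0
          · exact h0
          · nlinarith
        have : x - tc = 0 := by
          rcases mul_eq_zero.mp e2 with h0 | h0
          · exact h0
          · nlinarith
        linarith
  · exact hac h
  · rcases lt_trichotomy td ta with h' | h' | h'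
    · linarith
    · exact had h'.symm
    · rcases lt_trichotomy td tb with h'' | h'' | h''
      · exact h2 ⟨h, h', h''⟩
      · exact hbd h''.symm
      · -- nested: tc < ta ≤ x ≤ tb < td
        have key : (tb - x) * ((ta - tc) * (td - ta)) + (x - ta) * ((tb - tc) * (td - tb)) = 0 := by
          linear_combination (ta - tb) * hy
        have k1 : (0:ℝ) < (ta - tc) * (td - ta) := by nlinarith
        have k2 : (0:ℝ) < (tb - tc) * (td - tb) := by nlinarith
        have e1 : (tb - x) * ((ta - tc) * (td - ta)) = 0 := by nlinarith
        have e2 : (x - ta) * ((tb - tc) * (td - tb)) = 0 := by nlinarith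
        have h3 : tb - x = 0 := by
          rcases mul_eq_zero.mp e1 with h0 | h0
          · exact h0
          · nlinarith
        have h4 : x - ta = 0 := by
          rcases mul_eq_zero.mp e2 with h0 | h0
          · exact h0
          · nlinarith
        linarith

lemma BT.aux1 (ta tb tc td x y : ℝ)
    (hab : ta ≠ tb) (hcd : tc ≠ td)
    (hac : ta ≠ tc) (had : ta ≠ td) (hbc : tb ≠ tc) (hbd : tb ≠ td)
    (hP1 : ¬(ta < tc ∧ tc < tb ∧ tb < td)) (hP2 : ¬(tc < ta ∧ ta < td ∧ td < tb))
    (hP3 : ¬(tb < tc ∧ tc < ta ∧ ta < td)) (hP4 : ¬(tc < tb ∧ tb < td ∧ td < ta))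
    (hP5 : ¬(ta < td ∧ td < tb ∧ tb < tc)) (hP6 : ¬(td < ta ∧ ta < tc ∧ tc < tb))
    (hP7 : ¬(tb < td ∧ td < ta ∧ ta < tc)) (hP8 : ¬(td < tb ∧ tb < tc ∧ tc < ta))
    (hb1 : (x - ta) * (x - tb) ≤ 0) (hb2 : (x - tc) * (x - td) ≤ 0)
    (hy1 : y = (ta + tb) * x - ta * tb) (hy2 : y = (tc + td) * x - tc * td) : False := by
  have hy : (ta + tb) * x - ta * tb = (tc + td) * x - tc * td := by rw [← hy1, hy2]
  rcases hab.lt_or_gt with h | h <;> rcases hcd.lt_or_gt with h' | h'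
  · exact BT.aux0 ta tb tc td x h h' hP1 hP2 hac had hbc hbd
      (by nlinarith) (by nlinarith) (by nlinarith) (by nlinarith) hy
  · exact BT.aux0 ta tb td tc x h h' hP5 hP6 had hac hbd hbc
      (by nlinarith) (by nlinarith) (by nlinarith) (by nlinarith) (by linear_combination hy)
  · exact BT.aux0 tb ta tc td x h h' hP3 hP4 hbc hbd hac had
      (by nlinarith) (by nlinarith) (by nlinarith) (by nlinarith) (by linear_combination hy)
  · exact BT.aux0 tb ta td tc x h h' hP7 hP8 hbd hbc had hac
      (by nlinarith) (by nlinarith) (by nlinarith) (by nlinarith) (by linear_combination hy)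


lemma BT.forward {V : Type*} (G : SimpleGraph V) (ord : V ↪ ℕ)
    (hcross : ∀ a b c d, G.Adj a b → G.Adj c d →
      ¬ (ord a < ord c ∧ ord c < ord b ∧ ord b < ord d)) :
    IsOuterplanarG G := by
  set t : V → ℝ := fun v => (ord v : ℝ) with ht
  have tinj : ∀ {v w : V}, t v = t w → v = w := by
    intro v w h
    exact ord.injective (Nat.cast_injective h)
  have tne : ∀ {v w : V}, v ≠ w → t v ≠ t w := fun h h' => h (tinj h')
  refine ⟨fun v => (t v, t v ^ 2), ⟨?_, ?_, ?_, ?_⟩, ?_⟩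
  · -- injectivity
    intro v w h
    exact tinj (congrArg Prod.fst h)
  · -- disjoint segments
    intro a b c d hab hcd hac had hbc hbd
    rw [Set.eq_empty_iff_forall_notMem]
    rintro q ⟨⟨α, β, hα, hβ, hαβ, hq1⟩, ⟨γ, δ, hγ, hδ, hγδ, hq2⟩⟩
    rw [Prod.ext_iff] at hq1 hq2
    obtain ⟨hx1, hy1⟩ := hq1
    obtain ⟨hx2, hy2⟩ := hq2
    simp only [Prod.fst_add, Prod.snd_add, Prod.smul_fst, Prod.smul_snd, smul_eq_mul] at hx1 hy1 hx2 hy2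
    have hb1 : (q.1 - t a) * (q.1 - t b) ≤ 0 := by
      have key : (q.1 - t a) * (q.1 - t b) = -(α * β * (t a - t b)^2) := by
        have hα' : α = 1 - β := by linarith
        rw [hα'] at hx1 ⊢
        linear_combination (t a + t b - q.1 - ((1-β) * t a + β * t b)) * hx1
      rw [key]
      nlinarith [mul_nonneg (mul_nonneg hα hβ) (sq_nonneg (t a - t b))]
    have hb2 : (q.1 - t c) * (q.1 - t d) ≤ 0 := by
      have key : (q.1 - t c) * (q.1 - t d) = -(γ * δ * (t c - t d)^2) := by
        have hγ' : γ = 1 - δ := by linarith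
        rw [hγ'] at hx2 ⊢
        linear_combination (t c + t d - q.1 - ((1-δ) * t c + δ * t d)) * hx2
      rw [key]
      nlinarith [mul_nonneg (mul_nonneg hγ hδ) (sq_nonneg (t c - t d))]
    have hys1 : q.2 = (t a + t b) * q.1 - t a * t b := by
      have hβ' : β = 1 - α := by linarith
      rw [hβ'] at hx1 hy1
      linear_combination - hy1 + (t a + t b) * hx1
    have hys2 : q.2 = (t c + t d) * q.1 - t c * t d := by
      have hδ' : δ = 1 - γ := by linarith
      rw [hδ'] at hx2 hy2
      linear_combination - hy2 + (t c + t d) * hx2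
    have cast8 : ∀ u v w x : V, G.Adj u v → G.Adj w x →
        ¬(t u < t w ∧ t w < t v ∧ t v < t x) := by
      intro u v w x h1 h2 ⟨k1, k2, k3⟩
      exact hcross u v w x h1 h2 ⟨Nat.cast_lt.mp k1, Nat.cast_lt.mp k2, Nat.cast_lt.mp k3⟩
    exact BT.aux1 (t a) (t b) (t c) (t d) q.1 q.2
      (tne hab.ne) (tne hcd.ne) (tne hac) (tne had) (tne hbc) (tne hbd)
      (cast8 a b c d hab hcd) (cast8 c d a b hcd hab)
      (cast8 b a c d hab.symm hcd) (cast8 c d b a hcd hab.symm)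
      (cast8 a b d c hab hcd.symm) (cast8 d c a b hcd.symm hab)
      (cast8 b a d c hab.symm hcd.symm) (cast8 d c b a hcd.symm hab.symm)
      hb1 hb2 hys1 hys2
  · -- shared endpoint
    intro a b c hab hac hbc
    have hba := tne hab.ne'
    have hca := tne hac.ne'
    have hcb := tne (Ne.symm hbc)
    rw [Set.eq_singleton_iff_unique_mem]
    constructor
    · exact ⟨left_mem_segment ℝ _ _, left_mem_segment ℝ _ _⟩
    · rintro q ⟨⟨α, β, hα, hβ, hαβ, hq1⟩, ⟨γ, δ, hγ, hδ, hγδ, hq2⟩⟩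
      rw [Prod.ext_iff] at hq1 hq2
      obtain ⟨hx1, hy1⟩ := hq1
      obtain ⟨hx2, hy2⟩ := hq2
      simp only [Prod.fst_add, Prod.snd_add, Prod.smul_fst, Prod.smul_snd, smul_eq_mul] at hx1 hy1 hx2 hy2
      have hm : β * (t b - t a) = δ * (t c - t a) := by
        have hα' : α = 1 - β := by linarith
        have hγ' : γ = 1 - δ := by linarith
        rw [hα'] at hx1; rw [hγ'] at hx2
        linear_combination hx1 - hx2
      have hm2 : β * (t b - t a) * (t a + t b) = δ * (t c - t a) * (t a + t c) := by
        have hα' : α = 1 - β := by linarith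
        have hγ' : γ = 1 - δ := by linarith
        rw [hα'] at hy1; rw [hγ'] at hy2
        linear_combination hy1 - hy2
      have hm0 : β * (t b - t a) = 0 := by
        have : β * (t b - t a) * (t b - t c) = 0 := by linear_combination hm2 - (t a + t c) * hm
        rcases mul_eq_zero.mp this with h | h
        · exact h
        · exact absurd (by linarith : t b = t c) (tne hbc)
      have hβ0 : β = 0 := by
        rcases mul_eq_zero.mp hm0 with h | h
        · exact h
        · exact absurd (by linarith : t b = t a) hba
      have hα1 : α = 1 := by linarith
      rw [hβ0, hα1] at hx1 hy1
      have : q.1 = t a := by linarith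
      have : q.2 = t a ^ 2 := by nlinarith
      exact Prod.ext (by linarith) (by assumption)
  · -- no vertex on an edge segment
    intro a b v hab hva hvb ⟨α, β, hα, hβ, hαβ, hq1⟩
    rw [Prod.ext_iff] at hq1
    obtain ⟨hx1, hy1⟩ := hq1
    simp only [Prod.fst_add, Prod.snd_add, Prod.smul_fst, Prod.smul_snd, smul_eq_mul] at hx1 hy1
    have hys1 : t v ^ 2 = (t a + t b) * t v - t a * t b := by
      have hβ' : β = 1 - α := by linarith
      rw [hβ'] at hx1 hy1
      linear_combination - hy1 + (t a + t b) * hx1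
    have : (t v - t a) * (t v - t b) = 0 := by linear_combination hys1
    rcases mul_eq_zero.mp this with h | h
    · exact tne hva (by linarith)
    · exact tne hvb (by linarith)
  · -- extreme points
    intro v hv
    set L : ℝ × ℝ → ℝ := fun p => p.2 - 2 * t v * p.1 + t v ^ 2 with hL
    have hC : Convex ℝ {p : ℝ × ℝ | 1 ≤ L p} := by
      intro p hp q hq α β hα hβ hαβ
      simp only [Set.mem_setOf_eq, hL, Prod.fst_add, Prod.snd_add, Prod.smul_fst, Prod.smul_snd,
        smul_eq_mul] at *
      nlinarith
    have hsub : (fun v => (t v, t v ^ 2)) '' {w | w ≠ v} ⊆ {p : ℝ × ℝ | 1 ≤ L p} := by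
      rintro _ ⟨w, hw, rfl⟩
      simp only [Set.mem_setOf_eq, hL]
      have h1 : (1:ℝ) ≤ (t w - t v) ^ 2 := by
        rcases Nat.lt_or_ge (ord w) (ord v) with h | h
        · have : (ord w : ℝ) + 1 ≤ (ord v : ℝ) := by exact_mod_cast h
          nlinarith
        · have hne' : ord v ≠ ord w := fun h' => hw (ord.injective h'.symm)
          have : ord v < ord w := lt_of_le_of_ne h (Ne.symm (fun h' => hne' h'.symm))
          have : (ord v : ℝ) + 1 ≤ (ord w : ℝ) := by exact_mod_cast this
          nlinarith
      nlinarith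
    have := convexHull_min hsub hC hv
    simp only [Set.mem_setOf_eq, hL] at this
    nlinarith

lemma BT.mem_hull3 {A B C P : ℝ × ℝ} {α β γ : ℝ} (hα : 0 ≤ α) (hβ : 0 ≤ β) (hγ : 0 ≤ γ)
    (hsum : α + β + γ = 1) (hP : P = α • A + β • B + γ • C) :
    P ∈ convexHull ℝ ({A, B, C} : Set (ℝ × ℝ)) := by
  have hA : A ∈ convexHull ℝ ({A, B, C} : Set (ℝ × ℝ)) := subset_convexHull ℝ _ (by simp)
  have hB : B ∈ convexHull ℝ ({A, B, C} : Set (ℝ × ℝ)) := subset_convexHull ℝ _ (by simp)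
  have hC : C ∈ convexHull ℝ ({A, B, C} : Set (ℝ × ℝ)) := subset_convexHull ℝ _ (by simp)
  rcases eq_or_lt_of_le (add_nonneg hβ hγ) with h | h
  · have hβ0 : β = 0 := by linarith
    have hγ0 : γ = 0 := by linarith
    have hα1 : α = 1 := by linarith
    rw [hβ0, hγ0, hα1, one_smul, zero_smul, zero_smul, add_zero, add_zero] at hP
    rwa [hP]
  · have hm : β + γ ≠ 0 := ne_of_gt h
    have hz : (β / (β + γ)) • B + (γ / (β + γ)) • C ∈ convexHull ℝ ({A, B, C} : Set (ℝ × ℝ)) :=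
      (convex_convexHull ℝ _) hB hC (div_nonneg hβ h.le) (div_nonneg hγ h.le)
        (by field_simp)
    have := (convex_convexHull ℝ _) hA hz hα h.le (by linarith : α + (β + γ) = 1)
    have heq : α • A + (β + γ) • ((β / (β + γ)) • B + (γ / (β + γ)) • C)
        = α • A + β • B + γ • C := by
      rw [smul_add, smul_smul, smul_smul]
      rw [mul_div_cancel₀ _ hm, mul_div_cancel₀ _ hm, add_assoc]
    rw [heq] at this
    rwa [hP]

lemma BT.ext3 {V : Type*} (pos : V → ℝ × ℝ)
    (hext : ∀ v : V, pos v ∉ convexHull ℝ (pos '' {w | w ≠ v}))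
    {x b c d : V} (hb : b ≠ x) (hc : c ≠ x) (hd : d ≠ x)
    {α β γ : ℝ} (hα : 0 ≤ α) (hβ : 0 ≤ β) (hγ : 0 ≤ γ) (hsum : α + β + γ = 1)
    (hP : pos x = α • pos b + β • pos c + γ • pos d) : False := by
  apply hext x
  have hsub : ({pos b, pos c, pos d} : Set (ℝ × ℝ)) ⊆ pos '' {w | w ≠ x} := by
    rintro p (rfl | rfl | rfl)
    · exact ⟨b, hb, rfl⟩
    · exact ⟨c, hc, rfl⟩
    · exact ⟨d, hd, rfl⟩
  exact convexHull_mono hsub (BT.mem_hull3 hα hβ hγ hsum hP)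

lemma BT.ext2 {V : Type*} (pos : V → ℝ × ℝ)
    (hext : ∀ v : V, pos v ∉ convexHull ℝ (pos '' {w | w ≠ v}))
    {x b c : V} (hb : b ≠ x) (hc : c ≠ x)
    {α β : ℝ} (hα : 0 ≤ α) (hβ : 0 ≤ β) (hsum : α + β = 1)
    (hP : pos x = α • pos b + β • pos c) : False :=
  BT.ext3 pos hext hb hc hc hα hβ le_rfl (by linarith)
    (by rw [hP, zero_smul, add_zero])

lemma BT.ncol {V : Type*} (pos : V → ℝ × ℝ) (hinj : Function.Injective pos)
    (hext : ∀ v : V, pos v ∉ convexHull ℝ (pos '' {w | w ≠ v}))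
    {p q r : V} (hpq : p ≠ q) (hpr : p ≠ r) (hqr : q ≠ r) :
    ((pos q).1 - (pos p).1) * ((pos r).2 - (pos p).2)
      - ((pos q).2 - (pos p).2) * ((pos r).1 - (pos p).1) ≠ 0 := by
  intro h0
  set u1 := (pos q).1 - (pos p).1 with hu1
  set u2 := (pos q).2 - (pos p).2 with hu2
  set v1 := (pos r).1 - (pos p).1 with hv1
  set v2 := (pos r).2 - (pos p).2 with hv2
  have hu : u1 ≠ 0 ∨ u2 ≠ 0 := by
    by_contra h
    push_neg at h
    apply hpq
    apply hinj
    have e1 : (pos p).1 = (pos q).1 := by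
      have := h.1; rw [hu1] at this; linarith
    have e2 : (pos p).2 = (pos q).2 := by
      have := h.2; rw [hu2] at this; linarith
    exact Prod.ext e1 e2
  obtain ⟨k, hk1, hk2⟩ : ∃ k : ℝ, v1 = k * u1 ∧ v2 = k * u2 := by
    rcases eq_or_ne u1 0 with h | h
    · have hu2' : u2 ≠ 0 := by tauto
      refine ⟨v2 / u2, ?_, by field_simp⟩
      have : u2 * v1 = 0 := by rw [h] at h0; linarith [h0]
      have hv10 : v1 = 0 := by
        rcases mul_eq_zero.mp this with h' | h'
        · exact absurd h' hu2'
        · exact h'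
      rw [hv10, h, mul_zero]
    · refine ⟨v1 / u1, by field_simp, ?_⟩
      field_simp
      linear_combination h0
  -- pos r = pos p + k • (pos q - pos p)
  have hk1' : (pos r).1 - (pos p).1 = k * ((pos q).1 - (pos p).1) := by
    rw [← hu1, ← hv1]; exact hk1
  have hk2' : (pos r).2 - (pos p).2 = k * ((pos q).2 - (pos p).2) := by
    rw [← hu2, ← hv2]; exact hk2
  rcases le_or_gt k 0 with hk | hk
  · -- pos p ∈ segment [pos r, pos q]
    have h1k : (0:ℝ) < 1 - k := by linarith
    refine BT.ext2 pos hext hpr.symm hpq.symm (α := 1/(1-k)) (β := -k/(1-k))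
      (by positivity) (div_nonneg (by linarith) h1k.le) (by field_simp; ring) ?_
    refine Prod.ext ?_ ?_ <;>
      simp only [Prod.fst_add, Prod.snd_add, Prod.smul_fst, Prod.smul_snd, smul_eq_mul] <;>
      field_simp
    · linear_combination -hk1'
    · linear_combination -hk2'
  · rcases le_or_gt k 1 with hk' | hk'
    · -- pos r ∈ segment [pos p, pos q]
      refine BT.ext2 pos hext hpr hqr (α := 1-k) (β := k)
        (by linarith) hk.le (by ring) ?_
      refine Prod.ext ?_ ?_ <;>
        simp only [Prod.fst_add, Prod.snd_add, Prod.smul_fst, Prod.smul_snd, smul_eq_mul]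
      · linear_combination hk1'
      · linear_combination hk2'
    · -- pos q ∈ segment [pos p, pos r]
      refine BT.ext2 pos hext hpq hqr.symm (α := 1 - 1/k) (β := 1/k)
        (by rw [sub_nonneg]; exact div_le_one_of_le₀ hk'.le (by linarith)) (by positivity)
        (by ring) ?_
      have hk0 : k ≠ 0 := by linarith
      refine Prod.ext ?_ ?_ <;>
        simp only [Prod.fst_add, Prod.snd_add, Prod.smul_fst, Prod.smul_snd, smul_eq_mul] <;>
        field_simp
      · linear_combination -hk1'
      · linear_combination -hk2'

set_option maxHeartbeats 2000000 in
lemma BT.backward {V : Type*} [Fintype V] (G : SimpleGraph V)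
    (pos : V → ℝ × ℝ) (hinj : Function.Injective pos)
    (hdisj : ∀ a b c d : V, G.Adj a b → G.Adj c d → a ≠ c → a ≠ d → b ≠ c → b ≠ d →
      segment ℝ (pos a) (pos b) ∩ segment ℝ (pos c) (pos d) = ∅)
    (hext : ∀ v : V, pos v ∉ convexHull ℝ (pos '' {w | w ≠ v})) :
    ∃ ord : V ↪ ℕ, ∀ a b c d : V, G.Adj a b → G.Adj c d →
      ¬ ((ord a : ℕ) < ord c ∧ ord c < ord b ∧ ord b < ord d) := by
  classical
  cases isEmpty_or_nonempty V with
  | inl hV =>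
    exact ⟨⟨fun v => 0, fun a => isEmptyElim a⟩, fun a => isEmptyElim a⟩
  | inr hV =>
  obtain ⟨w0, -, hw0⟩ := Finset.exists_min_image Finset.univ (fun v => toLex (pos v))
    ⟨Classical.arbitrary V, Finset.mem_univ _⟩
  set X : V → ℝ := fun v => (pos v).1 - (pos w0).1 with hX
  set Y : V → ℝ := fun v => (pos v).2 - (pos w0).2 with hY
  set cr : V → V → ℝ := fun v w => X v * Y w - Y v * X w with hcr
  have hH : ∀ v : V, v ≠ w0 → 0 < X v ∨ (X v = 0 ∧ 0 < Y v) := by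
    intro v hv
    have h := hw0 v (Finset.mem_univ v)
    rw [Prod.Lex.le_iff, ofLex_toLex, ofLex_toLex] at h
    rcases h with h | ⟨h1, h2⟩
    · left; simp only [hX]; linarith
    · right
      refine ⟨by simp only [hX]; linarith, ?_⟩
      have hne : pos v ≠ pos w0 := fun h => hv (hinj h)
      have h3 : (pos w0).2 ≠ (pos v).2 := fun h' => hne (Prod.ext h1 h').symm
      simp only [hY]
      have := lt_of_le_of_ne h2 h3
      linarith
  have hH0 : ∀ v : V, v ≠ w0 → 0 ≤ X v := by
    intro v hv; rcases hH v hv with h | ⟨h, -⟩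
    · linarith
    · linarith
  have hcrne : ∀ v w : V, v ≠ w0 → w ≠ w0 → v ≠ w → cr v w ≠ 0 := by
    intro v w hv hw hvw
    have := BT.ncol pos hinj hext (p := w0) (q := v) (r := w) (Ne.symm hv) (Ne.symm hw) hvw
    simp only [hcr, hX, hY]
    exact this
  have hasym : ∀ v w : V, cr v w = - cr w v := by
    intro v w; simp only [hcr]; ring
  have htr : ∀ u v w : V, u ≠ w0 → v ≠ w0 → w ≠ w0 →
      0 < cr u v → 0 < cr v w → 0 < cr u w := by
    intro u v w hu hv hw h1 h2
    simp only [hcr] at h1 h2 ⊢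
    have hXw := hH0 w hw
    have hXv := hH0 v hv
    rcases hH u hu with hxu | ⟨hxu0, hyu⟩
    · rcases hH v hv with hxv | ⟨hxv0, hyv⟩
      · rcases hH w hw with hxw | ⟨hxw0, hyw⟩
        · nlinarith [mul_pos hxu h2, mul_pos hxw h1]
        · rw [hxw0]
          nlinarith [mul_pos hxu hyw]
      · have e : X v * Y w = 0 := by rw [hxv0]; ring
        linarith [mul_nonneg hyv.le hXw]
    · have e : X u * Y v = 0 := by rw [hxu0]; ring
      linarith [mul_nonneg hyu.le hXv]
  set R : V → V → Prop := fun v w => v ≠ w ∧ (v = w0 ∨ (w ≠ w0 ∧ 0 < cr v w)) with hR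
  have hRw0 : ∀ v w : V, R v w → w ≠ w0 := by
    rintro v w ⟨hvw, (rfl | ⟨hw, -⟩)⟩
    · exact Ne.symm hvw
    · exact hw
  have hRtrans : ∀ u v w : V, R u v → R v w → R u w := by
    rintro u v w ⟨huv, h1⟩ ⟨hvw, h2⟩
    have hwne : w ≠ w0 := hRw0 v w ⟨hvw, h2⟩
    by_cases hu : u = w0
    · exact ⟨by rw [hu]; exact Ne.symm hwne, Or.inl hu⟩
    · rcases h1 with h1 | ⟨hvne, hcruv⟩
      · exact absurd h1 hu
      · rcases h2 with h2 | ⟨-, hcrvw⟩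
        · exact absurd h2 hvne
        · have hpos : 0 < cr u w := htr u v w hu hvne hwne hcruv hcrvw
          have hune : u ≠ w := by
            intro h
            rw [h] at hcruv
            have := hasym w v
            linarith
          exact ⟨hune, Or.inr ⟨hwne, hpos⟩⟩
  have hRtot : ∀ v w : V, v ≠ w → R v w ∨ R w v := by
    intro v w hvw
    by_cases hv : v = w0
    · exact Or.inl ⟨hvw, Or.inl hv⟩
    · by_cases hw : w = w0
      · exact Or.inr ⟨Ne.symm hvw, Or.inl hw⟩
      · rcases (hcrne v w hv hw hvw).lt_or_gt with h | h
        · refine Or.inr ⟨Ne.symm hvw, Or.inr ⟨hv, ?_⟩⟩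
          have := hasym w v
          linarith
        · exact Or.inl ⟨hvw, Or.inr ⟨hw, h⟩⟩
  set ord0 : V → ℕ := fun v => (Finset.univ.filter (fun w => R w v)).card with hord0
  have hmono : ∀ v w : V, R v w → ord0 v < ord0 w := by
    intro v w hRvw
    apply Finset.card_lt_card
    rw [Finset.ssubset_iff_of_subset]
    · refine ⟨v, Finset.mem_filter.mpr ⟨Finset.mem_univ v, hRvw⟩, fun hmem => ?_⟩
      exact (Finset.mem_filter.mp hmem).2.1 rfl
    · intro x hx
      rw [Finset.mem_filter] at hx ⊢
      exact ⟨Finset.mem_univ x, hRtrans x v w hx.2 hRvw⟩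
  have hrev : ∀ v w : V, ord0 v < ord0 w → R v w := by
    intro v w h
    have hne : v ≠ w := by intro h'; rw [h'] at h; omega
    rcases hRtot v w hne with h' | h'
    · exact h'
    · have := hmono w v h'; omega
  refine ⟨⟨ord0, ?_⟩, ?_⟩
  · intro v w h
    by_contra hne
    rcases hRtot v w hne with h' | h' <;> [skip; skip] <;>
      [have := hmono v w h'; have := hmono w v h'] <;> omega
  · intro a b c d hab hcd hcon
    obtain ⟨h1, h2, h3⟩ := hcon
    have Rac := hrev a c h1
    have Rcb := hrev c b h2
    have Rbd := hrev b d h3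
    have Rab := hRtrans a c b Rac Rcb
    have Rad := hRtrans a b d Rab Rbd
    have Rcd := hRtrans c b d Rcb Rbd
    have hbw0 : b ≠ w0 := hRw0 c b Rcb
    have hcw0 : c ≠ w0 := hRw0 a c Rac
    have hdw0 : d ≠ w0 := hRw0 b d Rbd
    have hac : a ≠ c := Rac.1
    have hcb : c ≠ b := Rcb.1
    have hbd : b ≠ d := Rbd.1
    have hab' : a ≠ b := Rab.1
    have had : a ≠ d := Rad.1
    have hcd' : c ≠ d := Rcd.1
    have crpos : ∀ {u v : V}, R u v → u ≠ w0 → 0 < cr u v := by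
      rintro u v ⟨-, (h | ⟨-, h⟩)⟩ hu
      · exact absurd h hu
      · exact h
    set φ : ℝ × ℝ → ℝ := fun p =>
      ((pos b).1 - (pos a).1) * (p.2 - (pos a).2)
        - ((pos b).2 - (pos a).2) * (p.1 - (pos a).1) with hφ
    have hφC : φ (pos c) < 0 := by
      by_contra hc0
      push_neg at hc0
      rcases eq_or_ne a w0 with haw | haw
      · have h1' : 0 < cr c b := crpos Rcb hcw0
        have he : φ (pos c) = - cr c b := by
          simp only [hφ, hcr, hX, hY, haw]; ring
        linarith
      · have hK : 0 < cr a b := crpos Rab haw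
        have hcb' : 0 < cr c b := crpos Rcb hcw0
        have hac' : 0 < cr a c := crpos Rac haw
        have hiden : φ (pos c) = cr a b - cr c b - cr a c := by
          simp only [hφ, hcr, hX, hY]; ring
        have key1 : cr a b * ((pos c).1 - (pos w0).1)
            = cr c b * ((pos a).1 - (pos w0).1) + cr a c * ((pos b).1 - (pos w0).1) := by
          simp only [hcr, hX, hY]; ring
        have key2 : cr a b * ((pos c).2 - (pos w0).2)
            = cr c b * ((pos a).2 - (pos w0).2) + cr a c * ((pos b).2 - (pos w0).2) := by
          simp only [hcr, hX, hY]; ring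
        refine BT.ext3 pos hext (x := c) (b := w0) (c := a) (d := b)
          (Ne.symm hcw0) hac (Ne.symm hcb)
          (α := 1 - cr c b / cr a b - cr a c / cr a b)
          (β := cr c b / cr a b) (γ := cr a c / cr a b)
          ?_ (by positivity) (by positivity) (by ring) ?_
        · rw [hiden] at hc0
          rw [sub_sub, ← add_div, sub_nonneg, div_le_one hK]
          linarith
        · refine Prod.ext ?_ ?_ <;>
            simp only [Prod.fst_add, Prod.snd_add, Prod.smul_fst, Prod.smul_snd, smul_eq_mul] <;>
            field_simp
          · linear_combination key1
          · linear_combination key2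
    have hφD : 0 < φ (pos d) := by
      by_contra hd0
      push_neg at hd0
      rcases eq_or_ne a w0 with haw | haw
      · have h1' : 0 < cr b d := crpos Rbd hbw0
        have he : φ (pos d) = cr b d := by
          simp only [hφ, hcr, hX, hY, haw]; try ring
        linarith
      · have hK : 0 < cr a b := crpos Rab haw
        have hbd' : 0 < cr b d := crpos Rbd hbw0
        have had' : 0 < cr a d := crpos Rad haw
        have hiden : φ (pos d) = cr a b + cr b d - cr a d := by
          simp only [hφ, hcr, hX, hY]; ring
        have key1 : cr a d * ((pos b).1 - (pos w0).1)
            = cr b d * ((pos a).1 - (pos w0).1) + cr a b * ((pos d).1 - (pos w0).1) := by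
          simp only [hcr, hX, hY]; ring
        have key2 : cr a d * ((pos b).2 - (pos w0).2)
            = cr b d * ((pos a).2 - (pos w0).2) + cr a b * ((pos d).2 - (pos w0).2) := by
          simp only [hcr, hX, hY]; ring
        refine BT.ext3 pos hext (x := b) (b := w0) (c := a) (d := d)
          (Ne.symm hbw0) hab' (Ne.symm hbd)
          (α := 1 - cr b d / cr a d - cr a b / cr a d)
          (β := cr b d / cr a d) (γ := cr a b / cr a d)
          ?_ (by positivity) (by positivity) (by ring) ?_
        · rw [hiden] at hd0
          rw [sub_sub, ← add_div, sub_nonneg, div_le_one had']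
          linarith
        · refine Prod.ext ?_ ?_ <;>
            simp only [Prod.fst_add, Prod.snd_add, Prod.smul_fst, Prod.smul_snd, smul_eq_mul] <;>
            field_simp
          · linear_combination key1
          · linear_combination key2
    -- common part
    obtain ⟨tt, htt0, htt1, httphi⟩ : ∃ t : ℝ, 0 < t ∧ t < 1 ∧
        (1 - t) * φ (pos c) + t * φ (pos d) = 0 := by
      refine ⟨-φ (pos c) / (φ (pos d) - φ (pos c)),
        div_pos (by linarith) (by linarith), ?_, ?_⟩
      · rw [div_lt_one (by linarith)]; linarith
      · have hD : φ (pos d) - φ (pos c) ≠ 0 := by linarith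
        field_simp
        ring
    obtain ⟨q, hq1, hq2⟩ : ∃ q : ℝ × ℝ, q.1 = (1 - tt) * (pos c).1 + tt * (pos d).1
        ∧ q.2 = (1 - tt) * (pos c).2 + tt * (pos d).2 :=
      ⟨((1 - tt) * (pos c).1 + tt * (pos d).1, (1 - tt) * (pos c).2 + tt * (pos d).2), rfl, rfl⟩
    have hφq : φ q = 0 := by
      simp only [hφ] at httphi ⊢
      rw [hq1, hq2]
      linear_combination httphi
    have hBA : (pos b).1 - (pos a).1 ≠ 0 ∨ (pos b).2 - (pos a).2 ≠ 0 := by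
      by_contra h
      push_neg at h
      apply hab'
      apply hinj
      exact Prod.ext (by linarith [h.1]) (by linarith [h.2])
    obtain ⟨s, hs1, hs2⟩ : ∃ s : ℝ, q.1 - (pos a).1 = s * ((pos b).1 - (pos a).1)
        ∧ q.2 - (pos a).2 = s * ((pos b).2 - (pos a).2) := by
      simp only [hφ] at hφq
      rcases eq_or_ne ((pos b).1 - (pos a).1) 0 with h | h
      · have h2' : (pos b).2 - (pos a).2 ≠ 0 := by tauto
        refine ⟨(q.2 - (pos a).2) / ((pos b).2 - (pos a).2), ?_, by field_simp⟩
        rw [h, mul_zero]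
        rw [h] at hφq
        have : ((pos b).2 - (pos a).2) * (q.1 - (pos a).1) = 0 := by linarith
        rcases mul_eq_zero.mp this with h' | h'
        · exact absurd h' h2'
        · exact h'
      · refine ⟨(q.1 - (pos a).1) / ((pos b).1 - (pos a).1), by field_simp, ?_⟩
        field_simp
        linear_combination hφq
    rcases le_or_gt 0 s with hs0 | hs0
    · rcases le_or_gt s 1 with hsle | hsle
      · -- q in both segments: contradiction with disjointness
        have hqab : q ∈ segment ℝ (pos a) (pos b) := by
          refine ⟨1 - s, s, by linarith, hs0, by ring, ?_⟩
          refine Prod.ext ?_ ?_ <;>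
            simp only [Prod.fst_add, Prod.snd_add, Prod.smul_fst, Prod.smul_snd, smul_eq_mul]
          · linear_combination - hs1
          · linear_combination - hs2
        have hqcd : q ∈ segment ℝ (pos c) (pos d) := by
          refine ⟨1 - tt, tt, by linarith, htt0.le, by ring, ?_⟩
          refine Prod.ext ?_ ?_ <;>
            simp only [Prod.fst_add, Prod.snd_add, Prod.smul_fst, Prod.smul_snd, smul_eq_mul,
              hq1, hq2]
        have := hdisj a b c d hab hcd hac had (Ne.symm hcb) hbd
        rw [Set.eq_empty_iff_forall_notMem] at this
        exact this q ⟨hqab, hqcd⟩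
      · -- s > 1 : b inside hull of {c, d, a}
        have hs0' : (0:ℝ) < s := by linarith
        refine BT.ext3 pos hext (x := b) (b := c) (c := d) (d := a)
          hcb (Ne.symm hbd) hab'
          (α := (1 - tt) / s) (β := tt / s) (γ := (s - 1) / s)
          (div_nonneg (by linarith) hs0'.le) (div_nonneg htt0.le hs0'.le)
          (div_nonneg (by linarith) hs0'.le)
          (by field_simp; ring) ?_
        refine Prod.ext ?_ ?_ <;>
          simp only [Prod.fst_add, Prod.snd_add, Prod.smul_fst, Prod.smul_snd, smul_eq_mul] <;>
          field_simp
        · linear_combination hq1 - hs1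
        · linear_combination hq2 - hs2
    · -- s < 0 : a inside hull of {c, d, b}
      have h1s : (0:ℝ) < 1 - s := by linarith
      refine BT.ext3 pos hext (x := a) (b := c) (c := d) (d := b)
        hac.symm (Ne.symm had) hab'.symm
        (α := (1 - tt) / (1 - s)) (β := tt / (1 - s)) (γ := -s / (1 - s))
        (div_nonneg (by linarith) h1s.le) (div_nonneg htt0.le h1s.le)
        (div_nonneg (by linarith) h1s.le)
        (by field_simp; ring) ?_
      refine Prod.ext ?_ ?_ <;>
        simp only [Prod.fst_add, Prod.snd_add, Prod.smul_fst, Prod.smul_snd, smul_eq_mul] <;>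
        field_simp
      · linear_combination hq1 - hs1
      · linear_combination hq2 - hs2

/-- A (finite) graph has book thickness at most `1` if and only if it is outerplanar. -/
theorem bookThickness_le_one_iff_outerplanar {V : Type*} [Fintype V] (G : SimpleGraph V) :
    bookThickness G ≤ 1 ↔ IsOuterplanarG G := by
  constructor
  · intro h
    have hne : {p | ∃ ord page, IsBookEmbedding G p ord page}.Nonempty := by
      classical
      refine ⟨?_, ?_⟩
      · exact (Finset.univ.sup (fun ab : V × V =>
          Nat.pair (min (((Fintype.equivFin V).toEmbedding.trans Fin.valEmbedding) ab.1)
              (((Fintype.equivFin V).toEmbedding.trans Fin.valEmbedding) ab.2))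
            (max (((Fintype.equivFin V).toEmbedding.trans Fin.valEmbedding) ab.1)
              (((Fintype.equivFin V).toEmbedding.trans Fin.valEmbedding) ab.2)))) + 1
      · set ordb : V ↪ ℕ := (Fintype.equivFin V).toEmbedding.trans Fin.valEmbedding with hordb
        refine ⟨ordb, fun a b => Nat.pair (min (ordb a) (ordb b)) (max (ordb a) (ordb b)),
          ?_, ?_, ?_⟩
        · intro a b
          simp only []
          rw [min_comm, max_comm]
        · intro a b _
          exact Nat.lt_succ_of_le (Finset.le_sup (f := fun ab : V × V =>
            Nat.pair (min (ordb ab.1) (ordb ab.2)) (max (ordb ab.1) (ordb ab.2)))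
            (Finset.mem_univ (a, b)))
        · intro a b c d _ _ hpage hlt
          obtain ⟨hmin, hmax⟩ := Nat.pair_eq_pair.mp hpage
          omega
    have hmem := Nat.sInf_mem hne
    obtain ⟨ord, page, hsym, hlt, hcross⟩ := hmem
    refine BT.forward G ord ?_
    intro a b c d hab hcd
    apply hcross a b c d hab hcd
    have h1 := hlt a b hab
    have h2 := hlt c d hcd
    have hinf : sInf {p | ∃ ord page, IsBookEmbedding G p ord page} ≤ 1 := h
    omega
  · rintro ⟨pos, ⟨hinj, hdisj, hshare, hnoton⟩, hext⟩
    obtain ⟨ord, hord⟩ := BT.backward G pos hinj hdisj hext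
    apply Nat.sInf_le
    exact ⟨ord, fun _ _ => 0, fun _ _ => rfl, fun _ _ _ => Nat.one_pos,
      fun a b c d hab hcd _ => hord a b c d hab hcd⟩
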